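/- Let G be a finite index set, m a positive integer, σ > 0, τ = σ/m, and b, c > 0. Let s be a natural number and let v : {1,…,s+1} → ℝ, α : {1,…,s+1} × {1,…,s+1} → ℝ satisfy v_i ≥ 0, α_{ij} ≥ 0 (for j < i) and v_i + Σ_{j<i} α_{ij} = 1 for every i, and let 𝒞 > 0. Let M ≥ 0 and T̄ ≥ 0, and let Φ : (G → ℝ) → (G → ℝ) be a map such that whenever X : G → ℝ satisfies 0 ≤ X(g) ≤ M for all g ∈ G, then 0 ≤ Φ(X)(g) ≤ T̄ for all g ∈ G. Let Sⁿ, Iⁿ, Rⁿ : G → ℝ be defined for all integers n ≥ −m, where for each n ≥ 0 and each g ∈ G, writing T = Φ(I^{n−m})(g), the next values S^{n+1}(g) = S_(s+1), I^{n+1}(g) = I_(s+1), R^{n+1}(g) = R_(s+1) are obtained from the stage recursion S_(i) = v_i·Sⁿ(g) + Σ_{j<i} α_{ij}·(S_(j) − (τ/𝒞)·(S_(j)·T + c·S_(j))), I_(i) = v_i·Iⁿ(g) + Σ_{j<i} α_{ij}·(I_(j) + (τ/𝒞)·(S_(j)·T − b·I_(j))), R_(i) = v_i·Rⁿ(g)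 + Σ_{j<i} α_{ij}·(R_(j) + (τ/𝒞)·(b·I_(j) + c·S_(j))). Assume the history satisfies, for all −m ≤ n ≤ 0 and all g ∈ G: Sⁿ(g) ≥ 0, Iⁿ(g) ≥ 0, Rⁿ(g) ≥ 0 and Sⁿ(g) + Iⁿ(g) + Rⁿ(g) = S⁰(g) + I⁰(g) + R⁰(g), and that S⁰(g) + I⁰(g) + R⁰(g) ≤ M for all g ∈ G. If τ ≤ 𝒞·min(1/(T̄ + c), 1/b), then for every n ≥ 0 and every g ∈ G: Sⁿ(g) ≥ 0, Iⁿ(g) ≥ 0, Rⁿ(g) ≥ 0; Sⁿ(g) + Iⁿ(g) + Rⁿ(g) = S⁰(g) + I⁰(g) + R⁰(g); S^{n+1}(g) ≤ Sⁿ(g); and R^{n+1}(g) ≥ Rⁿ(g). -/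
import Mathlib

set_option maxHeartbeats 1000000


theorem stmt_17 {G : Type*} [Fintype G] (m : ℕ) (hm : 0 < m) (σ τ b c : ℝ)
    (hσ : 0 < σ) (hτdef : τ = σ / m) (hb : 0 < b) (hc : 0 < c)
    (s : ℕ) (v : Fin (s + 1) → ℝ) (α : Fin (s + 1) → Fin (s + 1) → ℝ)
    (hv : ∀ i, 0 ≤ v i) (hα : ∀ i j, j < i → 0 ≤ α i j)
    (hcons : ∀ i, v i + ∑ j ∈ Finset.Iio i, α i j = 1)
    (C : ℝ) (hC : 0 < C)
    (M Tbar : ℝ) (hM : 0 ≤ M) (hTbar : 0 ≤ Tbar)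
    (Φ : (G → ℝ) → (G → ℝ))
    (hΦ : ∀ X : G → ℝ, (∀ g, 0 ≤ X g ∧ X g ≤ M) → ∀ g, 0 ≤ Φ X g ∧ Φ X g ≤ Tbar)
    (S I R : ℤ → G → ℝ)
    (SS II RR : ℤ → G → Fin (s + 1) → ℝ)
    (hSS : ∀ n : ℤ, 0 ≤ n → ∀ g, ∀ i, SS n g i = v i * S n g +
      ∑ j ∈ Finset.Iio i, α i j *
        (SS n g j - (τ / C) * (SS n g j * Φ (I (n - m)) g + c * SS n g j)))
    (hII : ∀ n : ℤ, 0 ≤ n → ∀ g, ∀ i, II n g i = v i * I n g +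
      ∑ j ∈ Finset.Iio i, α i j *
        (II n g j + (τ / C) * (SS n g j * Φ (I (n - m)) g - b * II n g j)))
    (hRR : ∀ n : ℤ, 0 ≤ n → ∀ g, ∀ i, RR n g i = v i * R n g +
      ∑ j ∈ Finset.Iio i, α i j *
        (RR n g j + (τ / C) * (b * II n g j + c * SS n g j)))
    (hSnext : ∀ n : ℤ, 0 ≤ n → ∀ g, S (n + 1) g = SS n g (Fin.last s))
    (hInext : ∀ n : ℤ, 0 ≤ n → ∀ g, I (n + 1) g = II n g (Fin.last s))
    (hRnext : ∀ n : ℤ, 0 ≤ n → ∀ g, R (n + 1) g = RR n g (Fin.last s))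
    (hist_nn : ∀ n : ℤ, -(m : ℤ) ≤ n → n ≤ 0 → ∀ g,
      0 ≤ S n g ∧ 0 ≤ I n g ∧ 0 ≤ R n g)
    (hist_sum : ∀ n : ℤ, -(m : ℤ) ≤ n → n ≤ 0 → ∀ g,
      S n g + I n g + R n g = S 0 g + I 0 g + R 0 g)
    (hM0 : ∀ g, S 0 g + I 0 g + R 0 g ≤ M)
    (hτ : τ ≤ C * min (1 / (Tbar + c)) (1 / b)) :
    ∀ n : ℤ, 0 ≤ n → ∀ g,
      (0 ≤ S n g ∧ 0 ≤ I n g ∧ 0 ≤ R n g) ∧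
      S n g + I n g + R n g = S 0 g + I 0 g + R 0 g ∧
      S (n + 1) g ≤ S n g ∧ R n g ≤ R (n + 1) g := by
  have hτpos : 0 < τ := by
    rw [hτdef]
    have : (0:ℝ) < m := by exact_mod_cast hm
    positivity
  set d : ℝ := τ / C with hd
  have hdpos : 0 < d := div_pos hτpos hC
  have hTc : 0 < Tbar + c := by linarith
  have hd1 : d * (Tbar + c) ≤ 1 := by
    have h1 : τ ≤ C * (1 / (Tbar + c)) :=
      hτ.trans (mul_le_mul_of_nonneg_left (min_le_left _ _) hC.le)
    rw [mul_one_div] at h1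
    have h2 : τ * (Tbar + c) ≤ C := (le_div_iff₀ hTc).mp h1
    rw [hd, div_mul_eq_mul_div, div_le_one hC]
    exact h2
  have hd2 : d * b ≤ 1 := by
    have h1 : τ ≤ C * (1 / b) :=
      hτ.trans (mul_le_mul_of_nonneg_left (min_le_right _ _) hC.le)
    rw [mul_one_div] at h1
    have h2 : τ * b ≤ C := (le_div_iff₀ hb).mp h1
    rw [hd, div_mul_eq_mul_div, div_le_one hC]
    exact h2
  -- abstract stage lemma
  have stage : ∀ (Sn In Rn Tv : ℝ), 0 ≤ Sn → 0 ≤ In → 0 ≤ Rn → 0 ≤ Tv → Tv ≤ Tbar →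
      ∀ (A B E : Fin (s + 1) → ℝ),
      (∀ i, A i = v i * Sn + ∑ j ∈ Finset.Iio i, α i j *
        (A j - d * (A j * Tv + c * A j))) →
      (∀ i, B i = v i * In + ∑ j ∈ Finset.Iio i, α i j *
        (B j + d * (A j * Tv - b * B j))) →
      (∀ i, E i = v i * Rn + ∑ j ∈ Finset.Iio i, α i j *
        (E j + d * (b * B j + c * A j))) →
      ∀ i : Fin (s + 1),
        (0 ≤ A i ∧ 0 ≤ B i ∧ 0 ≤ E i) ∧
        A i + B i + E i = Sn + In + Rn ∧ A i ≤ Sn ∧ Rn ≤ E i := by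
    intro Sn In Rn Tv hSnn hInn hRnn hT0 hT1 A B E hA hB hE
    have hdT : d * (Tv + c) ≤ 1 :=
      le_trans (mul_le_mul_of_nonneg_left (by linarith) hdpos.le) hd1
    suffices h : ∀ k : ℕ, ∀ i : Fin (s + 1), i.val < k →
        (0 ≤ A i ∧ 0 ≤ B i ∧ 0 ≤ E i) ∧
        A i + B i + E i = Sn + In + Rn ∧ A i ≤ Sn ∧ Rn ≤ E i by
      intro i; exact h (s + 1) i i.isLt
    intro k
    induction k with
    | zero => intro i hi; omega
    | succ k ihk =>
      intro i hi
      have ih : ∀ j : Fin (s + 1), j < i →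
          (0 ≤ A j ∧ 0 ≤ B j ∧ 0 ≤ E j) ∧
          A j + B j + E j = Sn + In + Rn ∧ A j ≤ Sn ∧ Rn ≤ E j := by
        intro j hj
        exact ihk j (by have := Fin.lt_def.mp hj; omega)
      have hS0 : 0 ≤ A i := by
        rw [hA i]
        refine add_nonneg (mul_nonneg (hv i) hSnn) (Finset.sum_nonneg fun j hj => ?_)
        have hj' := Finset.mem_Iio.mp hj
        have hAj := (ih j hj').1.1
        refine mul_nonneg (hα i j hj') ?_
        rw [show A j - d * (A j * Tv + c * A j) = A j * (1 - d * (Tv + c)) from by ring]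
        exact mul_nonneg hAj (by linarith)
      have hI0 : 0 ≤ B i := by
        rw [hB i]
        refine add_nonneg (mul_nonneg (hv i) hInn) (Finset.sum_nonneg fun j hj => ?_)
        have hj' := Finset.mem_Iio.mp hj
        obtain ⟨⟨hAj, hBj, _⟩, _⟩ := ih j hj'
        refine mul_nonneg (hα i j hj') ?_
        rw [show B j + d * (A j * Tv - b * B j) = B j * (1 - d * b) + d * A j * Tv
          from by ring]
        exact add_nonneg (mul_nonneg hBj (by linarith))
          (mul_nonneg (mul_nonneg hdpos.le hAj) hT0)
      have hR0 : 0 ≤ E i := by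
        rw [hE i]
        refine add_nonneg (mul_nonneg (hv i) hRnn) (Finset.sum_nonneg fun j hj => ?_)
        have hj' := Finset.mem_Iio.mp hj
        obtain ⟨⟨hAj, hBj, hEj⟩, _⟩ := ih j hj'
        refine mul_nonneg (hα i j hj') ?_
        exact add_nonneg hEj (mul_nonneg hdpos.le
          (add_nonneg (mul_nonneg hb.le hBj) (mul_nonneg hc.le hAj)))
      have hNsum : A i + B i + E i = Sn + In + Rn := by
        rw [hA i, hB i, hE i]
        have h1 : (∑ j ∈ Finset.Iio i, α i j * (A j - d * (A j * Tv + c * A j)))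
            + (∑ j ∈ Finset.Iio i, α i j * (B j + d * (A j * Tv - b * B j)))
            + (∑ j ∈ Finset.Iio i, α i j * (E j + d * (b * B j + c * A j)))
            = (∑ j ∈ Finset.Iio i, α i j) * (Sn + In + Rn) := by
          rw [Finset.sum_mul, ← Finset.sum_add_distrib, ← Finset.sum_add_distrib]
          refine Finset.sum_congr rfl fun j hj => ?_
          have hj' := Finset.mem_Iio.mp hj
          have h := (ih j hj').2.1
          linear_combination (α i j) * h
        have h2 := hcons i
        linear_combination h1 + (Sn + In + Rn) * h2
      have hSle : A i ≤ Sn := by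
        rw [hA i]
        have h1 : (∑ j ∈ Finset.Iio i, α i j * (A j - d * (A j * Tv + c * A j)))
            ≤ ∑ j ∈ Finset.Iio i, α i j * Sn := by
          refine Finset.sum_le_sum fun j hj => ?_
          have hj' := Finset.mem_Iio.mp hj
          obtain ⟨⟨hAj, _, _⟩, _, hSlej, _⟩ := ih j hj'
          refine mul_le_mul_of_nonneg_left ?_ (hα i j hj')
          have h0 : 0 ≤ d * (A j * Tv + c * A j) :=
            mul_nonneg hdpos.le (add_nonneg (mul_nonneg hAj hT0) (mul_nonneg hc.le hAj))
          linarith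
        have h3 : v i * Sn + ∑ j ∈ Finset.Iio i, α i j * Sn = Sn := by
          rw [← Finset.sum_mul]
          linear_combination Sn * hcons i
        linarith
      have hRge : Rn ≤ E i := by
        rw [hE i]
        have h1 : (∑ j ∈ Finset.Iio i, α i j * Rn)
            ≤ ∑ j ∈ Finset.Iio i, α i j * (E j + d * (b * B j + c * A j)) := by
          refine Finset.sum_le_sum fun j hj => ?_
          have hj' := Finset.mem_Iio.mp hj
          obtain ⟨⟨hAj, hBj, _⟩, _, _, hRgej⟩ := ih j hj'
          refine mul_le_mul_of_nonneg_left ?_ (hα i j hj')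
          have h0 : 0 ≤ d * (b * B j + c * A j) :=
            mul_nonneg hdpos.le (add_nonneg (mul_nonneg hb.le hBj) (mul_nonneg hc.le hAj))
          linarith
        have h3 : v i * Rn + ∑ j ∈ Finset.Iio i, α i j * Rn = Rn := by
          rw [← Finset.sum_mul]
          linear_combination Rn * hcons i
        linarith
      exact ⟨⟨hS0, hI0, hR0⟩, hNsum, hSle, hRge⟩
  -- main invariant
  have key : ∀ n : ℤ, 0 ≤ n → ∀ k : ℤ, -(m : ℤ) ≤ k → k ≤ n → ∀ g,
      (0 ≤ S k g ∧ 0 ≤ I k g ∧ 0 ≤ R k g) ∧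
      S k g + I k g + R k g = S 0 g + I 0 g + R 0 g := by
    have base : ∀ k : ℤ, -(m : ℤ) ≤ k → k ≤ 0 → ∀ g,
        (0 ≤ S k g ∧ 0 ≤ I k g ∧ 0 ≤ R k g) ∧
        S k g + I k g + R k g = S 0 g + I 0 g + R 0 g := fun k hk1 hk2 g =>
      ⟨hist_nn k hk1 hk2 g, hist_sum k hk1 hk2 g⟩
    have step : ∀ n : ℤ, 0 ≤ n →
        (∀ k : ℤ, -(m : ℤ) ≤ k → k ≤ n → ∀ g,
          (0 ≤ S k g ∧ 0 ≤ I k g ∧ 0 ≤ R k g) ∧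
          S k g + I k g + R k g = S 0 g + I 0 g + R 0 g) →
        ∀ k : ℤ, -(m : ℤ) ≤ k → k ≤ n + 1 → ∀ g,
          (0 ≤ S k g ∧ 0 ≤ I k g ∧ 0 ≤ R k g) ∧
          S k g + I k g + R k g = S 0 g + I 0 g + R 0 g := by
      intro n hn ihn k hk1 hk2 g
      rcases lt_or_eq_of_le hk2 with hlt | heq
      · exact ihn k hk1 (by omega) g
      · subst heq
        have hXbound : ∀ g', 0 ≤ I (n - m) g' ∧ I (n - m) g' ≤ M := by
          intro g'
          have h1 := ihn (n - m) (by omega) (by omega) g'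
          refine ⟨h1.1.2.1, ?_⟩
          have := hM0 g'
          have h2 := h1.1.1
          have h3 := h1.1.2.2
          linarith [h1.2]
        have hTB := hΦ (I (n - m)) hXbound g
        have hinv := ihn n (by omega) le_rfl g
        have hst := stage (S n g) (I n g) (R n g) (Φ (I (n - m)) g)
          hinv.1.1 hinv.1.2.1 hinv.1.2.2 hTB.1 hTB.2
          (SS n g) (II n g) (RR n g) (hSS n hn g) (hII n hn g) (hRR n hn g)
          (Fin.last s)
        rw [hSnext n hn g, hInext n hn g, hRnext n hn g]
        refine ⟨⟨hst.1.1, hst.1.2.1, hst.1.2.2⟩, ?_⟩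
        rw [hst.2.1]
        exact hinv.2
    exact fun n hn => Int.le_induction base step n hn
  intro n hn g
  have hinv := key n hn n (by omega) le_rfl g
  have hXbound : ∀ g', 0 ≤ I (n - m) g' ∧ I (n - m) g' ≤ M := by
    intro g'
    have h1 := key n hn (n - m) (by omega) (by omega) g'
    refine ⟨h1.1.2.1, ?_⟩
    have := hM0 g'
    have h2 := h1.1.1
    have h3 := h1.1.2.2
    linarith [h1.2]
  have hTB := hΦ (I (n - m)) hXbound g
  have hst := stage (S n g) (I n g) (R n g) (Φ (I (n - m)) g)
    hinv.1.1 hinv.1.2.1 hinv.1.2.2 hTB.1 hTB.2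
    (SS n g) (II n g) (RR n g) (hSS n hn g) (hII n hn g) (hRR n hn g)
    (Fin.last s)
  refine ⟨hinv.1, hinv.2, ?_, ?_⟩
  · rw [hSnext n hn g]
    exact hst.2.2.1
  · rw [hRnext n hn g]
    exact hst.2.2.2
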